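/- Equivalence of characterisations of distributions of finite order: for a distribution f ∈ 𝒟'(ℝ^d) and r ∈ ℕ₀, the following are equivalent: (i) for every compact K ⊂ ℝ^d there is c_K < ∞ with |f(φ)| ≤ c_K ‖φ‖_{C^r} for all test functions φ supported in K; (ii) for every z ∈ ℝ^d and every λ̄ ∈ [1,∞), sup over φ ∈ 𝓑^r and λ ∈ [1,λ̄] of |f(φ_z^λ)| is finite; (iii) there exists z ∈ ℝ^d such that for every λ̄ ∈ ℕ, sup over φ ∈ 𝓑^r of |f(φ_z^{λ̄})| is finite. -/

import Mathlib

open MeasureTheory Metric Filter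
open scoped Classical Pointwise Topology

noncomputable section

/-- Euclidean space `ℝ^d`. -/
abbrev Ed (d : ℕ) := EuclideanSpace ℝ (Fin d)

/-- Multi-indices `k ∈ ℕ₀^d`. -/
abbrev MIdx (d : ℕ) := Fin d → ℕ

variable {d : ℕ}

/-- Degree `|k|` of a multi-index. -/
def mdeg (k : MIdx d) : ℕ := ∑ i, k i

/-- Factorial `k!` of a multi-index. -/
def mfact (k : MIdx d) : ℕ := ∏ i, Nat.factorial (k i)

/-- Monomial `v^k`. -/
def mpow (v : Ed d) (k : MIdx d) : ℝ := ∏ i, (v i) ^ (k i)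

/-- Partial (line) derivative in coordinate `i`. -/
def pd (i : Fin d) (f : Ed d → ℝ) : Ed d → ℝ :=
  fun x => lineDeriv ℝ f x (EuclideanSpace.single i (1:ℝ))

/-- Iterated partial derivative `∂^k`. -/
def mderiv (k : MIdx d) (f : Ed d → ℝ) : Ed d → ℝ :=
  (List.finRange d).foldr (fun i g => (pd i)^[k i] g) f

/-- Smooth compactly supported test function. -/
def IsTest (φ : Ed d → ℝ) : Prop := ContDiff ℝ (⊤ : ℕ∞) φ ∧ HasCompactSupport φ

/-- The `C^r` norm `max_{|k| ≤ r} ‖∂^k φ‖_∞`. -/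
def crNorm (r : ℕ) (φ : Ed d → ℝ) : ℝ :=
  ⨆ k : {k : MIdx d // mdeg k ≤ r}, ⨆ x : Ed d, |mderiv k.1 φ x|

/-- Generalized functions: arbitrary functionals on functions on `ℝ^d`. -/
abbrev DFunc (d : ℕ) := (Ed d → ℝ) → ℝ

/-- `f` is a distribution in `𝒟'(ℝ^d)`: linear on test functions and,
on every compact, bounded by some `C^r` norm. -/
def IsDistribution (f : DFunc d) : Prop :=
  (∀ φ ψ : Ed d → ℝ, IsTest φ → IsTest ψ → f (φ + ψ) = f φ + f ψ) ∧
  (∀ (c : ℝ) (φ : Ed d → ℝ), IsTest φ → f (c • φ) = c * f φ) ∧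
  (∀ K : Set (Ed d), IsCompact K → ∃ (r : ℕ) (C : ℝ),
    ∀ φ : Ed d → ℝ, IsTest φ → tsupport φ ⊆ K → |f φ| ≤ C * crNorm r φ)

/-- `f` is a distribution of order `r` (bound by the `C^r` norm on every compact). -/
def DistOrder (f : DFunc d) (r : ℕ) : Prop :=
  ∀ K : Set (Ed d), IsCompact K → ∃ C : ℝ,
    ∀ φ : Ed d → ℝ, IsTest φ → tsupport φ ⊆ K → |f φ| ≤ C * crNorm r φ

/-- `φ` is of class `C^r`: all iterated coordinate-partials up to order `r`
exist and are continuous. -/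
def IsCr (r : ℕ) (φ : Ed d → ℝ) : Prop :=
  ∀ k : MIdx d, mdeg k ≤ r →
    Continuous (mderiv k φ) ∧
    (mdeg k < r → ∀ (i : Fin d) (x : Ed d),
      LineDifferentiableAt ℝ (mderiv k φ) x (EuclideanSpace.single i (1:ℝ)))

/-- The functional `f` acts canonically (linearly, with local order-`r` bounds) on all
compactly supported `C^r` functions; i.e. `f` incorporates the canonical extension of a
distribution of order `r`. -/
def OrderExt (f : DFunc d) (r : ℕ) : Prop :=
  (∀ φ ψ : Ed d → ℝ, IsCr r φ → HasCompactSupport φ → IsCr r ψ → HasCompactSupport ψ →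
      f (φ + ψ) = f φ + f ψ) ∧
  (∀ (c : ℝ) (φ : Ed d → ℝ), IsCr r φ → HasCompactSupport φ → f (c • φ) = c * f φ) ∧
  (∀ K : Set (Ed d), IsCompact K → ∃ C : ℝ,
    ∀ φ : Ed d → ℝ, IsCr r φ → HasCompactSupport φ → tsupport φ ⊆ K → |f φ| ≤ C * crNorm r φ)

/-- The scaled recentred test function `φ_x^λ(y) = λ^{-d} φ(λ^{-1}(y-x))`. -/
def scTF (φ : Ed d → ℝ) (x : Ed d) (l : ℝ) : Ed d → ℝ :=
  fun y => (l ^ d)⁻¹ * φ (l⁻¹ • (y - x))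

/-- The class `𝓑^r` of smooth test functions supported in the closed unit ball with
all derivatives of order `≤ r` bounded by one. -/
def TB (d r : ℕ) : Set (Ed d → ℝ) :=
  {φ | IsTest φ ∧ tsupport φ ⊆ closedBall (0 : Ed d) 1 ∧
    ∀ k : MIdx d, mdeg k ≤ r → ∀ x, |mderiv k φ x| ≤ 1}

/-- The class `𝓑_γ` of smooth test functions supported in the closed unit ball which
annihilate all monomials of degree `≤ γ`. -/
def TAnn (d : ℕ) (γ : ℝ) : Set (Ed d → ℝ) :=
  {φ | IsTest φ ∧ tsupport φ ⊆ closedBall (0 : Ed d) 1 ∧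
    ∀ k : MIdx d, (mdeg k : ℝ) ≤ γ → (∫ z, φ z * mpow z k) = 0}

/-- The class `𝓑^r_γ = 𝓑^r ∩ 𝓑_γ`. -/
def TBAnn (d r : ℕ) (γ : ℝ) : Set (Ed d → ℝ) := TB d r ∩ TAnn d γ

/-- A germ: a family of functionals indexed by base points. -/
abbrev GermF (d : ℕ) := Ed d → DFunc d

/-- A germ of distributions, measurable in the base point. -/
def IsGerm (F : GermF d) : Prop :=
  (∀ x, IsDistribution (F x)) ∧ ∀ φ : Ed d → ℝ, IsTest φ → Measurable (fun x => F x φ)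

/-- Homogeneity bound with constant `C`: `|F_x(φ_x^λ)| ≤ C λ^ᾱ` on `(K, λ̄)` at order `r`. -/
def HomB (F : GermF d) (a : ℝ) (r : ℕ) (K : Set (Ed d)) (lb C : ℝ) : Prop :=
  ∀ x ∈ K, ∀ l : ℝ, 0 < l → l ≤ lb → ∀ φ ∈ TB d r, |F x (scTF φ x l)| ≤ C * l ^ a

/-- Coherence bound with constant `C`:
`|(F_y - F_x)(φ_x^λ)| ≤ C λ^α (|y-x|+λ)^{γ-α}` on `(K, λ̄)` at order `r`. -/
def CohB (F : GermF d) (a g : ℝ) (r : ℕ) (K : Set (Ed d)) (lb C : ℝ) : Prop :=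
  ∀ x ∈ K, ∀ y ∈ K, ∀ l : ℝ, 0 < l → l ≤ lb → ∀ φ ∈ TB d r,
    |F y (scTF φ x l) - F x (scTF φ x l)| ≤ C * l ^ a * (dist y x + l) ^ (g - a)

/-- `F` is `ᾱ`-homogeneous of order `r`. -/
def Homog (F : GermF d) (a : ℝ) (r : ℕ) : Prop :=
  ∀ K : Set (Ed d), IsCompact K → ∀ lb : ℝ, 1 ≤ lb → ∃ C, HomB F a r K lb C

/-- `F` is `(α, γ)`-coherent of order `r`. -/
def Coh (F : GermF d) (a g : ℝ) (r : ℕ) : Prop :=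
  ∀ K : Set (Ed d), IsCompact K → ∀ lb : ℝ, 1 ≤ lb → ∃ C, CohB F a g r K lb C

/-- Weak homogeneity bound with constant `C` (test functions annihilating polynomials
at small scales, plus a scale-one bound on all of `𝓑^r`). -/
def WHomB (F : GermF d) (a : ℝ) (r : ℕ) (K : Set (Ed d)) (lb C : ℝ) : Prop :=
  (∀ x ∈ K, ∀ l : ℝ, 0 < l → l ≤ lb → ∀ φ ∈ TBAnn d r a,
      |F x (scTF φ x l)| ≤ C * l ^ a) ∧
  (∀ x ∈ K, ∀ ψ ∈ TB d r, |F x (scTF ψ x 1)| ≤ C)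

/-- Weak coherence bound with constant `C`. -/
def WCohB (F : GermF d) (a g : ℝ) (r : ℕ) (K : Set (Ed d)) (lb C : ℝ) : Prop :=
  (∀ x ∈ K, ∀ y ∈ K, ∀ l : ℝ, 0 < l → l ≤ lb → ∀ φ ∈ TBAnn d r g,
      |F y (scTF φ x l) - F x (scTF φ x l)| ≤ C * l ^ a * (dist y x + l) ^ (g - a)) ∧
  (∀ x ∈ K, ∀ y ∈ K, ∀ ψ ∈ TB d r, |F y (scTF ψ x 1) - F x (scTF ψ x 1)| ≤ C)

/-- `F` is weakly `ᾱ`-homogeneous of order `r`. -/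
def WHomog (F : GermF d) (a : ℝ) (r : ℕ) : Prop :=
  ∀ K : Set (Ed d), IsCompact K → ∀ lb : ℝ, 1 ≤ lb → ∃ C, WHomB F a r K lb C

/-- `F` is weakly `(α,γ)`-coherent of order `r`. -/
def WCoh (F : GermF d) (a g : ℝ) (r : ℕ) : Prop :=
  ∀ K : Set (Ed d), IsCompact K → ∀ lb : ℝ, 1 ≤ lb → ∃ C, WCohB F a g r K lb C

/-- The canonical order `r_{ᾱ,α} = min{n ∈ ℕ₀ : n > max(-ᾱ, -α)}`. -/
def rJ (a b : ℝ) : ℕ := (⌊max (-a) (-b)⌋ + 1).toNat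

/-- Joint homogeneity-and-coherence bound at the canonical order. -/
def JointB (F : GermF d) (ab a g : ℝ) (K : Set (Ed d)) (lb C : ℝ) : Prop :=
  HomB F ab (rJ ab a) K lb C ∧ CohB F a g (rJ ab a) K lb C

/-- Joint weak homogeneity-and-coherence bound at the canonical order. -/
def WJointB (F : GermF d) (ab a g : ℝ) (K : Set (Ed d)) (lb C : ℝ) : Prop :=
  WHomB F ab (rJ ab a) K lb C ∧ WCohB F a g (rJ ab a) K lb C

/-- `R` is a `γ`-reconstruction of the `(α,γ)`-coherent germ `F`. -/
def IsRec (F : GermF d) (R : DFunc d) (a g : ℝ) : Prop :=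
  ∀ r : ℕ, -a < (r : ℝ) → ∀ K : Set (Ed d), IsCompact K → ∃ C : ℝ,
    ∀ x ∈ K, ∀ l : ℝ, 0 < l → l ≤ 1 → ∀ φ ∈ TB d r,
      |F x (scTF φ x l) - R (scTF φ x l)| ≤ C * l ^ g

/-- Mixed partial derivative `∂_1^k ∂_2^l K(x,y)` of a kernel. -/
def mixDeriv (k l : MIdx d) (Kf : Ed d → Ed d → ℝ) (x y : Ed d) : ℝ :=
  mderiv k (fun x' => mderiv l (fun y' => Kf x' y') y) x

/-- The kernel `K(x,y)` is of class `C^{m,r}` (mixed partials `∂_1^k ∂_2^l`, `|k| ≤ m`,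
`|l| ≤ r`, exist and are continuous). -/
def IsCmr (m r : ℕ) (Kf : Ed d → Ed d → ℝ) : Prop :=
  ∀ k l : MIdx d, mdeg k ≤ m → mdeg l ≤ r →
    Continuous (fun p : Ed d × Ed d => mixDeriv k l Kf p.1 p.2) ∧
    (mdeg k < m → ∀ (i : Fin d) (x y : Ed d),
      LineDifferentiableAt ℝ (fun x' => mixDeriv k l Kf x' y) x
        (EuclideanSpace.single i (1:ℝ))) ∧
    (mdeg l < r → ∀ (j : Fin d) (x y : Ed d),
      LineDifferentiableAt ℝ (mderiv l (fun y' => Kf x y')) y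
        (EuclideanSpace.single j (1:ℝ)))

/-- `Kn` is the dyadic decomposition of a `β`-regularising kernel of order `(m,r)`
with range `ρ` (Definition 2.3 of the paper). -/
def RegKer (d : ℕ) (β : ℝ) (m r : ℕ) (ρ : ℝ) (Kn : ℕ → Ed d → Ed d → ℝ) : Prop :=
  (∀ n, IsCmr m r (Kn n)) ∧
  (∀ n x y, Kn n x y ≠ 0 → dist x y ≤ ρ * 2 ^ (-(n : ℝ))) ∧
  (∀ K : Set (Ed d), IsCompact K → ∃ c : ℝ, 0 < c ∧
    (∀ n, ∀ k l : MIdx d, mdeg k ≤ m → mdeg l ≤ r → ∀ x ∈ K, ∀ y ∈ K,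
      |mixDeriv k l (Kn n) x y| ≤
        c * 2 ^ ((((d : ℝ) - β + (mdeg l : ℝ) + (mdeg k : ℝ))) * n)) ∧
    (∀ n, ∀ k l : MIdx d, mdeg k ≤ r → mdeg l ≤ r → ∀ y ∈ K,
      |∫ x, mpow (y - x) l * mderiv k (fun y' => Kn n x y') y| ≤ c * 2 ^ (-(β * (n : ℝ)))))

/-- `K_n^* ψ (y) = ∫ ψ(x) K_n(x,y) dx`. -/
def kstar (Kf : Ed d → Ed d → ℝ) (ψ : Ed d → ℝ) : Ed d → ℝ :=
  fun y => ∫ x, ψ x * Kf x y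

/-- `g = 𝖪 f`, i.e. `g(ψ) = Σ_n f(K_n^* ψ)` (with convergence) on test functions. -/
def KInt (Kn : ℕ → Ed d → Ed d → ℝ) (f g : DFunc d) : Prop :=
  ∀ ψ : Ed d → ℝ, IsTest ψ → HasSum (fun n => f (kstar (Kn n) ψ)) (g ψ)

/-- The kernel decomposition preserves polynomials at level `γ`. -/
def PresPoly (Kn : ℕ → Ed d → Ed d → ℝ) (γ : ℝ) : Prop :=
  ∀ n, ∀ k : MIdx d, (mdeg k : ℝ) ≤ γ →
    ∃ p : MvPolynomial (Fin d) ℝ, p.totalDegree ≤ mdeg k ∧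
      ∀ x : Ed d, (∫ y, Kn n x y * mpow y k) = MvPolynomial.eval (fun i => x i) p

/-- Distributional derivative `D^k f (φ) = (-1)^{|k|} f(∂^k φ)`. -/
def distDeriv (k : MIdx d) (f : DFunc d) : DFunc d :=
  fun φ => (-1 : ℝ) ^ (mdeg k) * f (mderiv k φ)

/-- `η ∈ 𝒟` with `∫ η = 1` and vanishing moments of orders `1 ≤ |l| < δ`. -/
def GoodEta (δ : ℝ) (η : Ed d → ℝ) : Prop :=
  IsTest η ∧ (∫ z, η z) = 1 ∧
    ∀ k : MIdx d, 1 ≤ mdeg k → (mdeg k : ℝ) < δ → (∫ z, η z * mpow z k) = 0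

/-- `v` is the pointwise derivative `D^k f(x)`, defined through the limit
`lim_{λ↓0} D^k f(η_x^λ)` for every admissible mollifier `η`. -/
def HasPtDeriv (f : DFunc d) (δ : ℝ) (k : MIdx d) (x : Ed d) (v : ℝ) : Prop :=
  ∀ η : Ed d → ℝ, GoodEta δ η →
    Tendsto (fun l : ℝ => distDeriv k f (scTF η x l)) (nhdsWithin 0 (Set.Ioi 0)) (nhds v)

/-- The Taylor polynomial `Σ_{|k| < δ} c_k (·-x)^k / k!`, viewed as the functional
`ψ ↦ Σ_{|k| < δ} c_k ∫ ψ(y) (y-x)^k / k! dy`. -/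
def taylorF (δ : ℝ) (c : MIdx d → ℝ) (x : Ed d) : DFunc d :=
  fun ψ => ∑ᶠ k ∈ {k : MIdx d | (mdeg k : ℝ) < δ},
    c k * ((∫ y, ψ y * mpow (y - x) k) / (mfact k))

/-- The smallest positive integer `> -γ` (used in Hölder–Zygmund spaces for `γ < 0`). -/
def rNeg (γ : ℝ) : ℕ := (⌊-γ + 1⌋).toNat

/-- The Hölder–Zygmund bound with constant `C` on the compact `K` (with `λ̄ = 1`). -/
def ZBound (γ : ℝ) (f : DFunc d) (K : Set (Ed d)) (C : ℝ) : Prop :=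
  (γ < 0 → ∀ x ∈ K, ∀ l : ℝ, 0 < l → l ≤ 1 → ∀ φ ∈ TB d (rNeg γ),
    |f (scTF φ x l)| ≤ C * l ^ γ) ∧
  (0 ≤ γ →
    (∀ x ∈ K, ∀ ψ ∈ TB d 0, |f (scTF ψ x 1)| ≤ C) ∧
    (∀ x ∈ K, ∀ l : ℝ, 0 < l → l ≤ 1 → ∀ φ ∈ TBAnn d 0 γ,
      |f (scTF φ x l)| ≤ C * l ^ γ))

/-- Membership in the local Hölder–Zygmund space `𝒵^γ`. -/
def MemZ (γ : ℝ) (f : DFunc d) : Prop :=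
  IsDistribution f ∧ ∀ K : Set (Ed d), IsCompact K → ∃ C, ZBound γ f K C

/-- `(Pg, Gg)` is a model with homogeneities `α` of order `rP`, with index set `S`. -/
def IsModelOn {ι : Type} (S : Finset ι) (Pg : ι → GermF d)
    (Gg : ι → ι → Ed d → Ed d → ℝ) (α : ι → ℝ) (rP : ℕ) : Prop :=
  (∀ i ∈ S, IsGerm (Pg i)) ∧
  (∀ i ∈ S, Homog (Pg i) (α i) rP) ∧
  (∀ i ∈ S, ∀ x y : Ed d, ∀ φ : Ed d → ℝ, IsTest φ →
    Pg i y φ = ∑ j ∈ S, Pg j x φ * Gg j i x y)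

/-- The modelled-distribution bound with constant `C` on the compact `K`. -/
def MDB {ι : Type} (S : Finset ι) (Gg : ι → ι → Ed d → Ed d → ℝ) (α : ι → ℝ)
    (γ : ℝ) (f : Ed d → ι → ℝ) (K : Set (Ed d)) (C : ℝ) : Prop :=
  (∀ x ∈ K, ∀ i ∈ S, |f x i| ≤ C) ∧
  (∀ x ∈ K, ∀ y ∈ K, ∀ i ∈ S,
    |(∑ j ∈ S, Gg i j x y * f y j) - f x i| ≤ C * (dist y x) ^ (γ - α i))

/-- `f` is a modelled distribution of order `γ` relative to the model data. -/
def IsMD {ι : Type} (S : Finset ι) (Gg : ι → ι → Ed d → Ed d → ℝ) (α : ι → ℝ)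
    (γ : ℝ) (f : Ed d → ι → ℝ) : Prop :=
  (∀ i ∈ S, Measurable fun x : Ed d => f x i) ∧
  ∀ K : Set (Ed d), IsCompact K → ∃ C, MDB S Gg α γ f K C

/-- The germ `⟨f, Π⟩_x = Σ_i f^i(x) Π^i_x`. -/
def germOf {ι : Type} (S : Finset ι) (Pg : ι → GermF d) (f : Ed d → ι → ℝ) : GermF d :=
  fun x φ => ∑ i ∈ S, f x i * Pg i x φ

lemma deriv_comp_const_mul_aux (H : ℝ → ℝ) {s : ℝ} (hs : s ≠ 0) (t : ℝ) :
    deriv (fun u => H (s * u)) t = s * deriv H (s * t) := by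
  by_cases hd : DifferentiableAt ℝ H (s * t)
  · have h1 : HasDerivAt (fun u : ℝ => s * u) s t := by
      simpa using (hasDerivAt_id t).const_mul s
    have h2 := (hd.hasDerivAt.comp t h1)
    rw [show (H ∘ fun u : ℝ => s * u) = fun u => H (s * u) from rfl] at h2
    rw [h2.deriv]; ring
  · have hd2 : ¬ DifferentiableAt ℝ (fun u => H (s * u)) t := by
      intro hc
      apply hd
      have h1 : DifferentiableAt ℝ (fun v : ℝ => s⁻¹ * v) (s * t) :=
        (differentiableAt_id.const_mul _)
      have h3 : s⁻¹ * (s * t) = t := by field_simp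
      have h4 := DifferentiableAt.comp (s * t) (h3 ▸ hc) h1
      have h5 : ((fun u => H (s * u)) ∘ fun v : ℝ => s⁻¹ * v) = H := by
        funext v; simp [mul_inv_cancel_left₀ hs]
      rwa [h5] at h4
    rw [deriv_zero_of_not_differentiableAt hd, deriv_zero_of_not_differentiableAt hd2, mul_zero]

lemma pd_affine (i : Fin d) (h : Ed d → ℝ) (c : ℝ) {s : ℝ} (hs : s ≠ 0) (b x : Ed d) :
    pd i (fun y => c * h (s • y + b)) x = (c * s) * pd i h (s • x + b) := by
  unfold pd lineDeriv
  have key : (fun t : ℝ => c * h (s • (x + t • EuclideanSpace.single i (1:ℝ)) + b))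
      = fun t : ℝ => c * ((fun u : ℝ => h ((s • x + b) + u • EuclideanSpace.single i (1:ℝ))) (s * t)) := by
    funext t
    congr 2
    rw [smul_add, smul_smul]
    abel
  rw [key, deriv_const_mul_field]
  have h2 := deriv_comp_const_mul_aux
    (fun u : ℝ => h (s • x + b + u • EuclideanSpace.single i (1:ℝ))) hs 0
  rw [h2, mul_zero]
  ring

lemma pd_iter_affine (i : Fin d) (m : ℕ) (h : Ed d → ℝ) (c : ℝ) {s : ℝ} (hs : s ≠ 0) (b : Ed d) :
    (pd i)^[m] (fun y => c * h (s • y + b)) = fun x => (c * s ^ m) * (pd i)^[m] h (s • x + b) := by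
  induction m generalizing h c with
  | zero => simp
  | succ m ih =>
    rw [Function.iterate_succ_apply, Function.iterate_succ_apply]
    have h1 : pd i (fun y => c * h (s • y + b)) = fun y => (c * s) * (pd i h) (s • y + b) :=
      funext fun x0 => pd_affine i h c hs b x0
    rw [h1, ih (pd i h) (c * s)]
    funext x; ring_nf

lemma foldr_affine (L : List (Fin d)) (k : MIdx d) (h : Ed d → ℝ) (c : ℝ) {s : ℝ} (hs : s ≠ 0) (b : Ed d) :
    L.foldr (fun i g => (pd i)^[k i] g) (fun y => c * h (s • y + b))
      = fun x => (c * s ^ (L.map k).sum) * (L.foldr (fun i g => (pd i)^[k i] g) h) (s • x + b) := by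
  induction L with
  | nil => simp
  | cons i L ih =>
    simp only [List.foldr_cons, List.map_cons, List.sum_cons]
    rw [ih, pd_iter_affine i (k i) _ _ hs]
    funext x; rw [pow_add]; ring_nf

lemma mderiv_affine (k : MIdx d) (h : Ed d → ℝ) (c : ℝ) {s : ℝ} (hs : s ≠ 0) (b x : Ed d) :
    mderiv k (fun y => c * h (s • y + b)) x = (c * s ^ (mdeg k)) * mderiv k h (s • x + b) := by
  have h1 := foldr_affine (List.finRange d) k h c hs b
  rw [mderiv, h1, mdeg, Fin.sum_univ_def]
  rfl


lemma pd_contDiff {g : Ed d → ℝ} (hg : ContDiff ℝ (⊤:ℕ∞) g) (i : Fin d) :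
    ContDiff ℝ (⊤:ℕ∞) (pd i g) := by
  have heq : pd i g = fun x => fderiv ℝ g x (EuclideanSpace.single i (1:ℝ)) :=
    funext fun x => (hg.differentiable (by simp) x).lineDeriv_eq_fderiv
  rw [heq]
  exact ((contDiff_infty_iff_fderiv.mp hg).2).clm_apply contDiff_const

lemma pd_zero_outside {g : Ed d → ℝ} {x : Ed d} (hx : x ∉ tsupport g) (i : Fin d) :
    pd i g x = 0 := by
  have hev : g =ᶠ[nhds x] 0 := notMem_tsupport_iff_eventuallyEq.mp hx
  have ht : Filter.Tendsto (fun t : ℝ => x + t • EuclideanSpace.single i (1:ℝ))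
      (nhds 0) (nhds x) := by
    have hc : Continuous fun t : ℝ => x + t • EuclideanSpace.single i (1:ℝ) := by
      continuity
    simpa using hc.tendsto 0
  have hev2 : (fun t : ℝ => g (x + t • EuclideanSpace.single i (1:ℝ))) =ᶠ[nhds 0]
      (fun _ => (0:ℝ)) := hev.comp_tendsto ht
  show lineDeriv ℝ g x _ = 0
  unfold lineDeriv
  rw [hev2.deriv_eq]
  simp

lemma pd_tsupport (i : Fin d) (g : Ed d → ℝ) : tsupport (pd i g) ⊆ tsupport g := by
  apply closure_minimal _ isClosed_closure
  intro x hx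
  by_contra h
  exact hx (pd_zero_outside h i)

lemma pd_iter_good (i : Fin d) (m : ℕ) {g : Ed d → ℝ} (hg : ContDiff ℝ (⊤:ℕ∞) g) :
    ContDiff ℝ (⊤:ℕ∞) ((pd i)^[m] g) ∧ tsupport ((pd i)^[m] g) ⊆ tsupport g := by
  induction m with
  | zero => exact ⟨hg, subset_rfl⟩
  | succ m ih =>
    rw [Function.iterate_succ_apply']
    exact ⟨pd_contDiff ih.1 i, (pd_tsupport i _).trans ih.2⟩

lemma foldr_good (k : MIdx d) (L : List (Fin d)) {φ : Ed d → ℝ} (hφ : ContDiff ℝ (⊤:ℕ∞) φ) :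
    ContDiff ℝ (⊤:ℕ∞) (L.foldr (fun i g => (pd i)^[k i] g) φ) ∧
    tsupport (L.foldr (fun i g => (pd i)^[k i] g) φ) ⊆ tsupport φ := by
  induction L with
  | nil => exact ⟨hφ, subset_rfl⟩
  | cons i L ih =>
    simp only [List.foldr_cons]
    obtain ⟨g1, g2⟩ := pd_iter_good i (k i) ih.1
    exact ⟨g1, g2.trans ih.2⟩


lemma mderiv_good (k : MIdx d) {φ : Ed d → ℝ} (hφ : ContDiff ℝ (⊤:ℕ∞) φ) :
    ContDiff ℝ (⊤:ℕ∞) (mderiv k φ) ∧ tsupport (mderiv k φ) ⊆ tsupport φ :=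
  foldr_good k (List.finRange d) hφ

lemma mderiv_bound (k : MIdx d) {φ : Ed d → ℝ} (hφ : IsTest φ) :
    ∃ C, ∀ x, |mderiv k φ x| ≤ C := by
  obtain ⟨h1, h2⟩ := mderiv_good k hφ.1
  have hcs : HasCompactSupport (mderiv k φ) :=
    IsCompact.of_isClosed_subset hφ.2 isClosed_closure h2
  obtain ⟨C, hC⟩ := h1.continuous.bounded_above_of_compact_support hcs
  exact ⟨C, fun x => by simpa using hC x⟩

lemma midx_finite (d r : ℕ) : Finite {k : MIdx d // mdeg k ≤ r} := by
  have h : ∀ (k : {k : MIdx d // mdeg k ≤ r}) (i : Fin d), k.1 i < r + 1 := by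
    intro k i
    have h1 : k.1 i ≤ mdeg k.1 :=
      Finset.single_le_sum (f := k.1) (fun j _ => Nat.zero_le _) (Finset.mem_univ i)
    exact Nat.lt_succ_of_le (h1.trans k.2)
  apply Finite.of_injective
    (fun k : {k : MIdx d // mdeg k ≤ r} => (fun i => (⟨k.1 i, h k i⟩ : Fin (r+1))))
  intro a b hab
  exact Subtype.ext (funext fun i => congrArg Fin.val (congrFun hab i))


lemma crNorm_nonneg (r : ℕ) (φ : Ed d → ℝ) : 0 ≤ crNorm r φ :=
  Real.iSup_nonneg fun _ => Real.iSup_nonneg fun _ => abs_nonneg _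

lemma le_crNorm {r : ℕ} {φ : Ed d → ℝ} (hφ : IsTest φ) {k : MIdx d} (hk : mdeg k ≤ r)
    (x : Ed d) : |mderiv k φ x| ≤ crNorm r φ := by
  obtain ⟨C, hC⟩ := mderiv_bound k hφ
  have hbdd : BddAbove (Set.range fun x => |mderiv k φ x|) :=
    ⟨C, by rintro y ⟨x, rfl⟩; exact hC x⟩
  refine (le_ciSup hbdd x).trans ?_
  have : Finite {k : MIdx d // mdeg k ≤ r} := midx_finite d r
  exact le_ciSup (f := fun k : {k : MIdx d // mdeg k ≤ r} => ⨆ x, |mderiv k.1 φ x|)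
    (Set.Finite.bddAbove (Set.finite_range _)) ⟨k, hk⟩

lemma crNorm_le_of_forall {r : ℕ} {φ : Ed d → ℝ} {M : ℝ} (hM : 0 ≤ M)
    (h : ∀ k : MIdx d, mdeg k ≤ r → ∀ x, |mderiv k φ x| ≤ M) : crNorm r φ ≤ M := by
  have hne : Nonempty {k : MIdx d // mdeg k ≤ r} := ⟨⟨fun _ => 0, by simp [mdeg]⟩⟩
  refine ciSup_le fun k => ?_
  refine ciSup_le fun x => h k.1 k.2 x

lemma foldr_id (L : List (Fin d)) (φ : Ed d → ℝ) :
    L.foldr (fun i g => (pd i)^[(0:ℕ)] g) φ = φ := by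
  induction L with
  | nil => rfl
  | cons i L ih => simpa using ih

lemma mderiv_zero_idx (φ : Ed d → ℝ) : mderiv (fun _ => 0) φ = φ :=
  foldr_id (List.finRange d) φ



lemma scTF_eq (φ : Ed d → ℝ) (z : Ed d) (l : ℝ) :
    scTF φ z l = fun y => (l ^ d)⁻¹ * φ (l⁻¹ • y + (-(l⁻¹ • z))) := by
  funext y
  show (l^d)⁻¹ * φ (l⁻¹ • (y - z)) = _
  rw [smul_sub, sub_eq_add_neg]

lemma mderiv_scTF (k : MIdx d) (φ : Ed d → ℝ) (z : Ed d) {l : ℝ} (hl : l ≠ 0) (x : Ed d) :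
    mderiv k (scTF φ z l) x = ((l^d)⁻¹ * (l⁻¹)^(mdeg k)) * mderiv k φ (l⁻¹ • (x - z)) := by
  rw [scTF_eq, mderiv_affine k φ ((l^d)⁻¹) (inv_ne_zero hl)]
  congr 1
  rw [smul_sub, sub_eq_add_neg]

lemma scTF_support {φ : Ed d → ℝ} {z : Ed d} {l : ℝ} (hl : l ≠ 0) :
    Function.support (scTF φ z l) ⊆ (fun u => z + l • u) '' tsupport φ := by
  intro y hy
  have hφy : φ (l⁻¹ • (y - z)) ≠ 0 := by
    intro h
    exact hy (by simp [scTF, h])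
  refine ⟨l⁻¹ • (y - z), subset_closure hφy, ?_⟩
  show z + l • l⁻¹ • (y - z) = y
  rw [smul_smul, mul_inv_cancel₀ hl, one_smul]
  abel

lemma isTest_scTF {φ : Ed d → ℝ} (hφ : IsTest φ) (z : Ed d) {l : ℝ} (hl : 0 < l) :
    IsTest (scTF φ z l) := by
  constructor
  · rw [scTF_eq]
    exact contDiff_const.mul (hφ.1.comp ((contDiff_id.const_smul l⁻¹).add contDiff_const))
  · have himg : IsCompact ((fun u : Ed d => z + l • u) '' tsupport φ) :=
      hφ.2.image (continuous_const.add (continuous_id.const_smul l))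
    exact IsCompact.of_isClosed_subset himg isClosed_closure
      (closure_minimal (scTF_support hl.ne') himg.isClosed)

lemma scTF_tsupport_ball {φ : Ed d → ℝ} (hφs : tsupport φ ⊆ closedBall (0:Ed d) 1)
    {z : Ed d} {l lb : ℝ} (hl : 0 < l) (hlb : l ≤ lb) :
    tsupport (scTF φ z l) ⊆ closedBall z lb := by
  apply closure_minimal _ isClosed_closedBall
  intro y hy
  obtain ⟨u, hu, rfl⟩ := scTF_support hl.ne' hy
  have hd : dist (z + l • u) z = l * ‖u‖ := by
    simp [dist_eq_norm, norm_smul, abs_of_pos hl]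
  rw [mem_closedBall, hd]
  have hu1 : ‖u‖ ≤ 1 := by
    have := hφs hu
    rwa [mem_closedBall_zero_iff] at this
  calc l * ‖u‖ ≤ l * 1 := by nlinarith [hl.le]
    _ ≤ lb := by linarith

lemma isTest_zero : IsTest (0 : Ed d → ℝ) := by
  refine ⟨contDiff_const, ?_⟩
  have : tsupport (0 : Ed d → ℝ) = ∅ := by
    simp [tsupport]
  show IsCompact (tsupport (0 : Ed d → ℝ))
  rw [this]
  exact isCompact_empty

lemma mderiv_zero_fun (k : MIdx d) : mderiv k (0 : Ed d → ℝ) = fun _ => (0:ℝ) := by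
  have h0 : (0 : Ed d → ℝ) = fun y => (0:ℝ) * (0 : Ed d → ℝ) ((1:ℝ) • y + 0) := by
    funext y; simp
  funext x
  rw [h0, mderiv_affine k _ 0 one_ne_zero]
  simp

lemma f_zero {f : DFunc d} (hf : IsDistribution f) : f 0 = 0 := by
  have h := hf.2.1 0 0 isTest_zero
  simpa using h

lemma zero_mem_TB (d r : ℕ) : (0 : Ed d → ℝ) ∈ TB d r := by
  refine ⟨isTest_zero, ?_, ?_⟩
  · have : tsupport (0 : Ed d → ℝ) = ∅ := by simp [tsupport]
    rw [this]; exact Set.empty_subset _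
  · intro k hk x
    rw [mderiv_zero_fun]
    simp


/-- Remark 2.2: equivalence of the characterisations of distributions of
finite order `r`:
(i) locally bounded by the `C^r` norm on every compact;
(ii) for every base point `z` and every `λ̄ ∈ [1,∞)`, `sup_{φ ∈ 𝓑^r, λ ∈ [1,λ̄]} |f(φ_z^λ)| < ∞`;
(iii) for some base point `z`, for every integer `λ̄ ≥ 1`, `sup_{φ ∈ 𝓑^r} |f(φ_z^λ̄)| < ∞`. -/
theorem distribution_order_equivalences
    (d : ℕ) (hd : 0 < d) (f : DFunc d) (hf : IsDistribution f) (r : ℕ) :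
    ((∀ K : Set (Ed d), IsCompact K → ∃ C : ℝ,
        ∀ φ : Ed d → ℝ, IsTest φ → tsupport φ ⊆ K → |f φ| ≤ C * crNorm r φ) ↔
      (∀ z : Ed d, ∀ lb : ℝ, 1 ≤ lb → ∃ C : ℝ,
        ∀ φ ∈ TB d r, ∀ l : ℝ, 1 ≤ l → l ≤ lb → |f (scTF φ z l)| ≤ C)) ∧
    ((∀ z : Ed d, ∀ lb : ℝ, 1 ≤ lb → ∃ C : ℝ,
        ∀ φ ∈ TB d r, ∀ l : ℝ, 1 ≤ l → l ≤ lb → |f (scTF φ z l)| ≤ C) ↔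
      (∃ z : Ed d, ∀ lb : ℕ, 1 ≤ lb → ∃ C : ℝ,
        ∀ φ ∈ TB d r, |f (scTF φ z (lb : ℝ))| ≤ C)) := by
  have h12 : (∀ K : Set (Ed d), IsCompact K → ∃ C : ℝ,
        ∀ φ : Ed d → ℝ, IsTest φ → tsupport φ ⊆ K → |f φ| ≤ C * crNorm r φ) →
      (∀ z : Ed d, ∀ lb : ℝ, 1 ≤ lb → ∃ C : ℝ,
        ∀ φ ∈ TB d r, ∀ l : ℝ, 1 ≤ l → l ≤ lb → |f (scTF φ z l)| ≤ C) := by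
    intro hI z lb _
    obtain ⟨C, hC⟩ := hI (closedBall z lb) (isCompact_closedBall z lb)
    refine ⟨|C|, ?_⟩
    intro φ hφ l hl1 hllb
    have hl0 : (0:ℝ) < l := lt_of_lt_of_le one_pos hl1
    have htest := isTest_scTF hφ.1 z hl0
    have hsupp := scTF_tsupport_ball hφ.2.1 (z := z) hl0 hllb
    have hcr : crNorm r (scTF φ z l) ≤ 1 := by
      apply crNorm_le_of_forall zero_le_one
      intro k hk x
      rw [mderiv_scTF k φ z hl0.ne' x, abs_mul]
      have h1 : |mderiv k φ (l⁻¹ • (x - z))| ≤ 1 := hφ.2.2 k hk _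
      have h2 : |(l^d)⁻¹ * (l⁻¹)^(mdeg k)| ≤ 1 := by
        rw [abs_of_nonneg (by positivity), inv_pow, ← mul_inv, ← pow_add]
        have h3 : (1:ℝ) ≤ l ^ (d + mdeg k) := one_le_pow₀ hl1
        exact inv_le_one_of_one_le₀ h3
      calc |(l^d)⁻¹ * (l⁻¹)^(mdeg k)| * |mderiv k φ (l⁻¹ • (x - z))|
          ≤ 1 * 1 := mul_le_mul h2 h1 (abs_nonneg _) zero_le_one
        _ = 1 := one_mul 1
    calc |f (scTF φ z l)| ≤ C * crNorm r (scTF φ z l) := hC _ htest hsupp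
      _ ≤ |C| * 1 :=
        mul_le_mul (le_abs_self C) hcr (crNorm_nonneg _ _) (abs_nonneg C)
      _ = |C| := mul_one _
  have h23 : (∀ z : Ed d, ∀ lb : ℝ, 1 ≤ lb → ∃ C : ℝ,
        ∀ φ ∈ TB d r, ∀ l : ℝ, 1 ≤ l → l ≤ lb → |f (scTF φ z l)| ≤ C) →
      (∃ z : Ed d, ∀ lb : ℕ, 1 ≤ lb → ∃ C : ℝ,
        ∀ φ ∈ TB d r, |f (scTF φ z (lb : ℝ))| ≤ C) := by
    intro h
    refine ⟨0, fun lb hlb => ?_⟩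
    have hlb' : (1:ℝ) ≤ (lb:ℝ) := by exact_mod_cast hlb
    obtain ⟨C, hC⟩ := h 0 (lb:ℝ) hlb'
    exact ⟨C, fun φ hφ => hC φ hφ (lb:ℝ) hlb' le_rfl⟩
  have h31 : (∃ z : Ed d, ∀ lb : ℕ, 1 ≤ lb → ∃ C : ℝ,
        ∀ φ ∈ TB d r, |f (scTF φ z (lb : ℝ))| ≤ C) →
      (∀ K : Set (Ed d), IsCompact K → ∃ C : ℝ,
        ∀ φ : Ed d → ℝ, IsTest φ → tsupport φ ⊆ K → |f φ| ≤ C * crNorm r φ) := by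
    rintro ⟨z, hz⟩ K hK
    obtain ⟨R, hR⟩ := hK.isBounded.subset_closedBall z
    obtain ⟨n, hn⟩ := exists_nat_ge (max R 1)
    have hn1 : 1 ≤ n := by
      have : (1:ℝ) ≤ (n:ℝ) := le_trans (le_max_right R 1) hn
      exact_mod_cast this
    have hKn : K ⊆ closedBall z (n:ℝ) :=
      hR.trans (closedBall_subset_closedBall (le_trans (le_max_left R 1) hn))
    obtain ⟨C, hC⟩ := hz n hn1
    have hC0 : 0 ≤ C := le_trans (abs_nonneg _) (hC 0 (zero_mem_TB d r))
    set n' : ℝ := (n:ℝ) with hn'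
    have hn'1 : (1:ℝ) ≤ n' := by rw [hn']; exact_mod_cast hn1
    have hn'0 : (0:ℝ) < n' := lt_of_lt_of_le one_pos hn'1
    refine ⟨C * n' ^ (d + r), ?_⟩
    intro φ hφ hsupp
    set N := crNorm r φ with hNdef
    have hN0 : (0:ℝ) ≤ N := crNorm_nonneg r φ
    rcases eq_or_lt_of_le hN0 with hNeq | hNpos
    · -- N = 0 : φ = 0
      have hphi0 : φ = 0 := by
        funext x
        have h1 : |mderiv (fun _ => 0) φ x| ≤ N := le_crNorm hφ (by simp [mdeg]) x
        rw [mderiv_zero_idx] at h1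
        have h2 : |φ x| ≤ 0 := h1.trans hNeq.symm.le
        simpa using le_antisymm h2 (abs_nonneg _)
      have hf0 : f φ = 0 := by rw [hphi0]; exact f_zero hf
      rw [hf0]
      simp only [abs_zero]
      exact mul_nonneg (mul_nonneg hC0 (by positivity)) hN0
    · -- N > 0
      set M : ℝ := n' ^ (d + r) * N with hM
      have hM0 : (0:ℝ) < M := by positivity
      set ψ : Ed d → ℝ := fun y => (M⁻¹ * n' ^ d) * φ (n' • y + z) with hψ
      -- ψ as a rescaling of φ (for IsTest)
      have hψ2 : ψ = fun y => M⁻¹ * scTF φ (-(n'⁻¹ • z)) n'⁻¹ y := by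
        funext y
        show (M⁻¹ * n' ^ d) * φ (n' • y + z) = M⁻¹ * (((n'⁻¹) ^ d)⁻¹ * φ ((n'⁻¹)⁻¹ • (y - -(n'⁻¹ • z))))
        rw [inv_inv, ← inv_pow, inv_inv]
        rw [sub_neg_eq_add, smul_add, smul_smul, mul_inv_cancel₀ hn'0.ne', one_smul]
        ring
      have hψtest : IsTest ψ := by
        rw [hψ2]
        have h0 := isTest_scTF hφ (-(n'⁻¹ • z)) (inv_pos.mpr hn'0)
        refine ⟨contDiff_const.mul h0.1, ?_⟩
        have : (fun y => M⁻¹ * scTF φ (-(n'⁻¹ • z)) n'⁻¹ y)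
            = (fun _ => M⁻¹) * scTF φ (-(n'⁻¹ • z)) n'⁻¹ := rfl
        rw [this]
        exact h0.2.mul_left
      have hψTB : ψ ∈ TB d r := by
        refine ⟨hψtest, ?_, ?_⟩
        · -- support in unit ball
          apply closure_minimal _ isClosed_closedBall
          intro y hy
          have hry : φ (n' • y + z) ≠ 0 := by
            intro h0
            apply hy
            show (M⁻¹ * n' ^ d) * φ (n' • y + z) = 0
            rw [h0, mul_zero]
          have hmem : n' • y + z ∈ K := hsupp (subset_closure hry)
          have hdist := hKn hmem
          rw [mem_closedBall] at hdist
          have hdy : dist (n' • y + z) z = n' * ‖y‖ := by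
            simp [dist_eq_norm, norm_smul, abs_of_pos hn'0]
          rw [mem_closedBall_zero_iff]
          rw [hdy] at hdist
          nlinarith
        · -- derivative bounds
          intro k hk x
          have heq : mderiv k ψ x
              = ((M⁻¹ * n' ^ d) * n' ^ (mdeg k)) * mderiv k φ (n' • x + z) :=
            mderiv_affine k φ (M⁻¹ * n' ^ d) hn'0.ne' z x
          rw [heq, abs_mul]
          have h1 : |mderiv k φ (n' • x + z)| ≤ N := le_crNorm hφ hk _
          have hcpos : (0:ℝ) ≤ M⁻¹ * n' ^ d * n' ^ (mdeg k) := by positivity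
          rw [abs_of_nonneg hcpos]
          have hkey : M⁻¹ * n' ^ d * n' ^ (mdeg k) * N ≤ 1 := by
            rw [hM]
            have hpow : n' ^ d * n' ^ (mdeg k) ≤ n' ^ (d + r) := by
              rw [← pow_add]
              exact pow_le_pow_right₀ hn'1 (by omega)
            have h4 : n' ^ d * n' ^ (mdeg k) * N ≤ n' ^ (d + r) * N :=
              mul_le_mul_of_nonneg_right hpow hN0
            have h5 : (0:ℝ) < n' ^ (d + r) * N := by positivity
            calc (n' ^ (d + r) * N)⁻¹ * n' ^ d * n' ^ (mdeg k) * N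
                = (n' ^ d * n' ^ (mdeg k) * N) / (n' ^ (d + r) * N) := by
                  field_simp
              _ ≤ 1 := (div_le_one h5).mpr h4
          calc M⁻¹ * n' ^ d * n' ^ (mdeg k) * |mderiv k φ (n' • x + z)|
              ≤ M⁻¹ * n' ^ d * n' ^ (mdeg k) * N := by
                exact mul_le_mul_of_nonneg_left h1 hcpos
            _ ≤ 1 := hkey
      -- φ = M • scTF ψ z n'
      have hrec : φ = M • scTF ψ z n' := by
        funext y
        show φ y = M * ((n' ^ d)⁻¹ * ψ (n'⁻¹ • (y - z)))
        rw [hψ]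
        show φ y = M * ((n' ^ d)⁻¹ * ((M⁻¹ * n' ^ d) * φ (n' • n'⁻¹ • (y - z) + z)))
        rw [smul_smul, mul_inv_cancel₀ hn'0.ne', one_smul, sub_add_cancel]
        field_simp
      have htest2 : IsTest (scTF ψ z n') := isTest_scTF hψtest z hn'0
      have hlin : f φ = M * f (scTF ψ z n') := by
        rw [hrec]
        exact hf.2.1 M _ htest2
      rw [hlin, abs_mul, abs_of_pos hM0]
      have hbound := hC ψ hψTB
      calc M * |f (scTF ψ z n')| ≤ M * C :=
            mul_le_mul_of_nonneg_left hbound hM0.le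
        _ = C * n' ^ (d + r) * N := by rw [hM]; ring
  exact ⟨⟨h12, fun hII => h31 (h23 hII)⟩, ⟨h23, fun hIII => h12 (h31 hIII)⟩⟩
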